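/- Let w be a word of length n and let G_w[h] be the maximum value j' - j over all pairs of positions h < j < j' ≤ n such that w[j] = w[j'] and no occurrence of the letter w[j] lies strictly between j and j'. If h < p < ⌊(G_w[h]+1)/2⌋, then (h,p) is not an Abelian period of w. -/

import Mathlib

set_option maxHeartbeats 1000000


/-- A word `w` has Abelian period `(h, p)` if `w = u₀u₁⋯u_{k-1}u_k` where `|u₀| = h`,
all the middle blocks `u₁, …, u_{k-1}` have length `p` and the same Parikh vector,
the Parikh vectors of the head `u₀` and the tail `u_k` are contained in that common
Parikh vector, `h < p`, there is at least one middle block, and the tail has length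
`< p`. -/
def HasAbelianPeriod {α : Type*} [DecidableEq α] (w : List α) (h p : ℕ) : Prop :=
  h < p ∧ ∃ (u0 : List α) (us : List (List α)) (uk : List α),
    w = u0 ++ us.flatten ++ uk ∧
    u0.length = h ∧
    us ≠ [] ∧
    (∀ u ∈ us, u.length = p) ∧
    (∀ u ∈ us, ∀ v ∈ us, ∀ a : α, u.count a = v.count a) ∧
    (∀ u ∈ us, ∀ a : α, u0.count a ≤ u.count a) ∧
    (∀ u ∈ us, ∀ a : α, uk.count a ≤ u.count a) ∧
    uk.length < p

/-- Each block of a flatten of equal-length lists is a `drop`/`take` of the flatten. -/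
lemma block_eq_take_drop {α : Type*} (us : List (List α)) (p : ℕ)
    (hlen : ∀ u ∈ us, u.length = p) :
    ∀ i (hi : i < us.length), us[i] = (us.flatten.drop (i * p)).take p := by
  induction us with
  | nil => intro i hi; simp at hi
  | cons u us ih =>
    intro i hi
    have hup : u.length = p := hlen u (by simp)
    cases i with
    | zero =>
      simp only [List.getElem_cons_zero, List.flatten_cons, Nat.zero_mul, List.drop_zero]
      rw [← hup, List.take_left]
    | succ k =>
      have h1 : (k + 1) * p = u.length + k * p := by rw [hup]; ring
      simp only [List.getElem_cons_succ, List.flatten_cons, h1, List.drop_length_add_append]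
      exact ih (fun v hv => hlen v (by simp [hv])) k (by simpa using hi)

/-- Let `w` be a word of length `n` and let `G = G_w[h]` be the (maximum)
gap `j' - j` over pairs of positions `h < j < j' ≤ n` (1-indexed) with `w[j] = w[j']`
and no occurrence of the letter `w[j]` strictly between `j` and `j'`. If
`h < p < ⌊(G+1)/2⌋`, then `(h, p)` is not an Abelian period of `w`.  (For the
conclusion it suffices that the gap `G` is realized by some such pair `j, j'`.) -/
theorem not_abelian_period_of_lt_gap {α : Type*} [DecidableEq α]
    (w : List α) (n h p G : ℕ) (hn : w.length = n)
    (hG : ∃ j j' : ℕ, h < j ∧ j < j' ∧ j' ≤ n ∧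
      w[j - 1]? = w[j' - 1]? ∧
      (∀ m : ℕ, j < m → m < j' → w[m - 1]? ≠ w[j - 1]?) ∧
      j' - j = G)
    (hp1 : h < p) (hp2 : p < (G + 1) / 2) :
    ¬ HasAbelianPeriod w h p := by
  obtain ⟨j, j', hhj, hjj', hj'n, heq, hno, hGdef⟩ := hG
  rintro ⟨-, u0, us, uk, hw, hu0, hne, hlen, hpar, -, hukc, huk⟩
  have hp0 : 0 < p := Nat.lt_of_le_of_lt (Nat.zero_le h) hp1
  have hGge : 2 * p + 1 ≤ G := by omega
  have hjG : j' = j + G := by omega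
  set K := us.length with hK
  have hK0 : 0 < K := List.length_pos_iff.mpr hne
  have hflat : us.flatten.length = K * p := by
    rw [List.length_flatten, List.map_congr_left hlen]
    simp [mul_comm, hK]
  have hwlen : n = h + K * p + uk.length := by
    rw [← hn, hw]; simp [hu0, hflat]; ring
  -- j ≤ h + K * p  (otherwise both j and j' lie in the short tail)
  have hjle : j ≤ h + K * p := by
    by_contra hcon
    push_neg at hcon
    have hnj : n < j' := by rw [hjG]; linarith
    exact absurd hj'n (by omega)
  -- the block index containing position j
  obtain ⟨i, hi⟩ : ∃ i, i = (j - 1 - h) / p := ⟨_, rfl⟩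
  have hige : i * p ≤ j - 1 - h := by rw [hi]; exact Nat.div_mul_le_self _ _
  have hdm : p * i + (j - 1 - h) % p = j - 1 - h := by rw [hi]; exact Nat.div_add_mod _ p
  have hrlt : (j - 1 - h) % p < p := Nat.mod_lt _ hp0
  have hilt : j - 1 - h < (i + 1) * p := by
    have e : (i + 1) * p = p * i + p := by ring
    rw [e]; linarith
  have hsub : j - 1 - h + h + 1 = j := by omega
  have hj1 : h + i * p < j := by linarith
  have hj2 : j ≤ h + (i + 1) * p := by linarith
  have e2 : (i + 2) * p = (i + 1) * p + p := by ring
  have e1 : (i + 1) * p = i * p + p := by ring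
  -- block i+1 exists and lies strictly between j and j'
  have hGlt : h + (i + 2) * p < j' := by
    rw [hjG, e2, e1]; linarith
  have hbK : i + 1 < K := by
    have h2' : j' < h + (K + 1) * p := by
      have e3 : (K + 1) * p = K * p + p := by ring
      rw [e3]; linarith
    have h3 : (i + 2) * p < (K + 1) * p := by linarith
    have h4 : i + 2 < K + 1 := Nat.lt_of_mul_lt_mul_right h3
    omega
  have hblock := block_eq_take_drop us p hlen (i + 1) hbK
  have hle2 : (i + 2) * p ≤ K * p := Nat.mul_le_mul_right p (by omega)
  have hdropw : w.drop (h + (i + 1) * p) = us.flatten.drop ((i + 1) * p) ++ uk := by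
    rw [hw, List.append_assoc,
      show h + (i + 1) * p = u0.length + (i + 1) * p by rw [hu0],
      List.drop_length_add_append, List.drop_append_of_le_length]
    rw [hflat]
    exact Nat.mul_le_mul_right p hbK.le
  have hblock' : us[i + 1] = (w.drop (h + (i + 1) * p)).take p := by
    rw [hdropw, List.take_append_of_le_length, hblock]
    rw [List.length_drop, hflat]
    exact Nat.le_sub_of_add_le (by linarith)
  have hjlt : j - 1 < w.length := by omega
  obtain ⟨a, ha⟩ : ∃ a, a = w[j - 1] := ⟨_, rfl⟩
  -- the letter `a` does not occur in block i+1
  have hnot : a ∉ us[i + 1] := by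
    intro hmem
    rw [hblock'] at hmem
    obtain ⟨t, ht, hta⟩ := List.getElem_of_mem hmem
    have ht' : t < p := ht.trans_le (List.length_take_le _ _)
    have hidx : h + (i + 1) * p + t < w.length := by
      rw [hn, ← hjG] at *; rw [e2] at hGlt; linarith
    have hval : w[h + (i + 1) * p + t] = a := by
      rw [List.getElem_take, List.getElem_drop] at hta
      rw [hta, ha]
    obtain ⟨m, hm⟩ : ∃ m, m = h + (i + 1) * p + t + 1 := ⟨_, rfl⟩
    have hm1 : m - 1 = h + (i + 1) * p + t := by simp [hm]
    have hlt1 : j < m := by rw [hm]; linarith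
    have hlt2 : m < j' := by rw [hm]; rw [e2] at hGlt; linarith
    apply hno m hlt1 hlt2
    rw [hm1, List.getElem?_eq_getElem hidx, List.getElem?_eq_getElem hjlt, hval, ha]
  -- the letter `a` occurs in some block
  have hji : j - 1 - h < us.flatten.length := by
    rw [hflat]; linarith
  have hmemflat : a ∈ us.flatten := by
    have h1 : w[j - 1]? = some a := by rw [ha]; exact List.getElem?_eq_getElem hjlt
    rw [hw, List.append_assoc, List.getElem?_append_right (by rw [hu0]; omega), hu0,
      List.getElem?_append, if_pos hji] at h1
    exact List.mem_of_getElem? h1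
  obtain ⟨u, hu, hau⟩ := List.mem_flatten.mp hmemflat
  have hc1 : 1 ≤ u.count a := List.one_le_count_iff.mpr hau
  have hc2 : us[i + 1].count a = 0 := List.count_eq_zero.mpr hnot
  have := hpar u hu us[i + 1] (List.getElem_mem hbK) a
  omega
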